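/- Under the setup T = H V_k V_kᵀ L⁺ with k ≤ rank(L), if τ ≥ 0 and ε ≥ 0 satisfy ‖Hx‖² ≤ τ‖Lx‖² + ε‖x‖² for all x, then the operator norm of H − TL satisfies ‖H − TL‖² ≤ τ σ_{k+1}² + ε, where σ_{k+1} is the (k+1)st largest singular value of L (taken as 0 if k = rank(L)). -/

import Mathlib

set_option maxHeartbeats 1000000


open Matrix

noncomputable def enorm {n : ℕ} (x : Fin n → ℝ) : ℝ := Real.sqrt (∑ i, x i ^ 2)

noncomputable def opNorm {m n : ℕ} (A : Matrix (Fin m) (Fin n) ℝ) : ℝ :=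
  sSup {t : ℝ | ∃ x : Fin n → ℝ, _root_.enorm x ≤ 1 ∧ t = _root_.enorm (A.mulVec x)}

noncomputable def lamMax {n : ℕ} (A : Matrix (Fin n) (Fin n) ℝ) : ℝ :=
  sSup (spectrum ℝ A)

structure SVD (m N : ℕ) (L : Matrix (Fin m) (Fin N) ℝ) where
  U : Matrix (Fin m) (Fin m) ℝ
  V : Matrix (Fin N) (Fin N) ℝ
  s : ℕ → ℝ
  hU : Uᵀ * U = 1
  hV : Vᵀ * V = 1
  hs_nonneg : ∀ j, 0 ≤ s j
  hs_anti : ∀ i j : ℕ, i ≤ j → s j ≤ s i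
  hs_zero : ∀ j : ℕ, L.rank < j → s j = 0
  hL : L = U * (Matrix.of fun (i : Fin m) (j : Fin N) => if (i : ℕ) = (j : ℕ) then s ((i : ℕ) + 1) else 0) * Vᵀ

def IsMoorePenrose {m N : ℕ} (L : Matrix (Fin m) (Fin N) ℝ)
    (Lp : Matrix (Fin N) (Fin m) ℝ) : Prop :=
  L * Lp * L = L ∧ Lp * L * Lp = Lp ∧ (L * Lp)ᵀ = L * Lp ∧ (Lp * L)ᵀ = Lp * L

def IsSelection {N r : ℕ} (S : Matrix (Fin N) (Fin r) ℝ) : Prop :=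
  ∃ f : Fin r → Fin N, Function.Injective f ∧ S = Matrix.of fun i j => if i = f j then 1 else 0

/-! ### Auxiliary lemmas -/

lemma enorm_sq_eq {n : ℕ} (x : Fin n → ℝ) : _root_.enorm x ^ 2 = ∑ i, x i ^ 2 := by
  rw [_root_.enorm, Real.sq_sqrt]; positivity

lemma enorm_nonneg' {n : ℕ} (x : Fin n → ℝ) : 0 ≤ _root_.enorm x := Real.sqrt_nonneg _

lemma sum_sq_mulVec_ortho {n : ℕ} {W : Matrix (Fin n) (Fin n) ℝ} (hW : Wᵀ * W = 1)
    (z : Fin n → ℝ) : ∑ i, (W.mulVec z i) ^ 2 = ∑ i, z i ^ 2 := by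
  have h1 : ∀ (v : Fin n → ℝ), ∑ i, v i ^ 2 = v ⬝ᵥ v := by
    intro v; simp [dotProduct, sq]
  rw [h1, h1, dotProduct_mulVec, ← mulVec_transpose, mulVec_mulVec, hW, one_mulVec]

lemma svd_s_ne_zero {m N : ℕ} {L : Matrix (Fin m) (Fin N) ℝ} (svd : SVD m N L)
    {j : ℕ} (hj1 : 1 ≤ j) (hjr : j ≤ L.rank) : svd.s j ≠ 0 := by
  intro hzero
  set r := j - 1 with hr
  set S : Matrix (Fin m) (Fin N) ℝ :=
    Matrix.of fun (i : Fin m) (l : Fin N) => if (i : ℕ) = (l : ℕ) then svd.s ((i : ℕ) + 1) else 0 with hS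
  set Sr : Matrix (Fin m) (Fin r) ℝ :=
    Matrix.of fun i t => if (i : ℕ) = (t : ℕ) then svd.s ((i : ℕ) + 1) else 0 with hSr
  set Jt : Matrix (Fin r) (Fin N) ℝ :=
    Matrix.of fun t l => if (t : ℕ) = (l : ℕ) then (1 : ℝ) else 0 with hJt
  have hfac : S = Sr * Jt := by
    ext i l
    simp only [hS, hSr, hJt, Matrix.mul_apply, Matrix.of_apply]
    by_cases hil : (i : ℕ) = (l : ℕ)
    · by_cases hir : (i : ℕ) < r
      · rw [Finset.sum_eq_single (⟨(i : ℕ), hir⟩ : Fin r)]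
        · simp [hil]
        · intro b _ hb
          rcases eq_or_ne ((i : ℕ)) ((b : ℕ)) with h | h
          · exfalso; apply hb; ext; simp [← h]
          · simp [h]
        · simp
      · have hij : j ≤ (i : ℕ) + 1 := by omega
        have : svd.s ((i : ℕ) + 1) = 0 :=
          le_antisymm (hzero ▸ svd.hs_anti j _ hij) (svd.hs_nonneg _)
        rw [if_pos hil, this]
        apply (Finset.sum_eq_zero _).symm
        intro b _
        have : ¬ ((i : ℕ) = (b : ℕ)) := by
          intro h; apply hir; rw [h]; exact b.isLt
        simp [this]
    · rw [if_neg hil]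
      apply (Finset.sum_eq_zero _).symm
      intro b _
      rcases eq_or_ne ((i : ℕ)) ((b : ℕ)) with h | h
      · have : ¬ ((b : ℕ) = (l : ℕ)) := by omega
        simp [this]
      · simp [h]
  have hrank : L.rank ≤ r := by
    calc L.rank = ((svd.U * Sr) * (Jt * svd.Vᵀ)).rank := by
          rw [← Matrix.mul_assoc, Matrix.mul_assoc svd.U, ← hfac, hS, ← svd.hL]
      _ ≤ (svd.U * Sr).rank := Matrix.rank_mul_le_left _ _
      _ ≤ Fintype.card (Fin r) := Matrix.rank_le_card_width _
      _ = r := Fintype.card_fin r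
  omega

lemma vk_factor {m N k : ℕ} {L : Matrix (Fin m) (Fin N) ℝ} (svd : SVD m N L)
    (hk : k ≤ L.rank) (hkN : k ≤ N) :
    ∃ B : Matrix (Fin m) (Fin k) ℝ, svd.V.submatrix id (Fin.castLE hkN) = Lᵀ * B := by
  have hkm : k ≤ m := le_trans hk ((Matrix.rank_le_card_height L).trans (by simp))
  set S : Matrix (Fin m) (Fin N) ℝ :=
    Matrix.of fun (i : Fin m) (l : Fin N) => if (i : ℕ) = (l : ℕ) then svd.s ((i : ℕ) + 1) else 0 with hS
  set E : Matrix (Fin m) (Fin k) ℝ :=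
    Matrix.of fun i j => if (i : ℕ) = (j : ℕ) then (svd.s ((j : ℕ) + 1))⁻¹ else 0 with hE
  refine ⟨svd.U * E, ?_⟩
  have hLt : Lᵀ = svd.V * Sᵀ * svd.Uᵀ := by
    have h := congrArg Matrix.transpose svd.hL
    rw [h]; simp [Matrix.transpose_mul, Matrix.mul_assoc, hS]
  rw [hLt, Matrix.mul_assoc, Matrix.mul_assoc, ← Matrix.mul_assoc svd.Uᵀ, svd.hU, Matrix.one_mul,
    ← Matrix.mul_assoc]
  have hSE : Sᵀ * E = Matrix.of fun (i : Fin N) (j : Fin k) =>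
      if (i : ℕ) = (j : ℕ) then (1 : ℝ) else 0 := by
    ext i j
    simp only [Matrix.mul_apply, Matrix.transpose_apply, hS, hE, Matrix.of_apply]
    by_cases hij : (i : ℕ) = (j : ℕ)
    · have hjm : (j : ℕ) < m := lt_of_lt_of_le j.isLt hkm
      rw [Finset.sum_eq_single (⟨(j : ℕ), hjm⟩ : Fin m)]
      · have hne : svd.s ((j : ℕ) + 1) ≠ 0 :=
          svd_s_ne_zero svd (Nat.succ_le_succ (Nat.zero_le _)) (Nat.succ_le_of_lt (lt_of_lt_of_le j.isLt hk))
        simp [hij, mul_inv_cancel₀ hne]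
      · intro b _ hb
        have : ¬ ((b : ℕ) = (j : ℕ)) := by
          intro h; apply hb; ext; simp [h]
        simp [this]
      · simp
    · rw [if_neg hij]
      apply Finset.sum_eq_zero
      intro b _
      rcases eq_or_ne ((b : ℕ)) ((i : ℕ)) with h | h
      · have : ¬ ((b : ℕ) = (j : ℕ)) := by omega
        simp [this]
      · simp [h]
  rw [Matrix.mul_assoc, hSE]
  ext i j
  simp only [Matrix.mul_apply, Matrix.of_apply, Matrix.submatrix_apply, id]
  rw [Finset.sum_eq_single (Fin.castLE hkN j)]
  · simp
  · intro b _ hb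
    have : ¬ ((b : ℕ) = (j : ℕ)) := by
      intro h; apply hb; ext; simpa using h
    simp [this]
  · simp

lemma sum_castLE {N k : ℕ} (hkN : k ≤ N) (f : Fin N → ℝ) :
    ∑ j : Fin k, f (Fin.castLE hkN j) = ∑ t : Fin N, if (t : ℕ) < k then f t else 0 := by
  set F : ℕ → ℝ := fun n => if h : n < N then (if n < k then f ⟨n, h⟩ else 0) else 0 with hF
  have h1 : ∑ j : Fin k, f (Fin.castLE hkN j) = ∑ n ∈ Finset.range k, F n := by
    rw [← Fin.sum_univ_eq_sum_range F k]
    apply Finset.sum_congr rfl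
    intro j _
    have hjN : (j : ℕ) < N := lt_of_lt_of_le j.isLt hkN
    simp only [hF, dif_pos hjN, if_pos j.isLt]
    rfl
  have h2 : ∑ t : Fin N, (if (t : ℕ) < k then f t else 0) = ∑ n ∈ Finset.range N, F n := by
    rw [← Fin.sum_univ_eq_sum_range F N]
    apply Finset.sum_congr rfl
    intro t _
    simp only [hF, dif_pos t.isLt]
  rw [h1, h2]
  apply Finset.sum_subset (Finset.range_subset_range.2 hkN)
  intro n _ hn
  simp only [Finset.mem_range, not_lt] at hn
  simp only [hF]
  split
  · rw [if_neg (by omega)]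
  · rfl

theorem stmt4 {M m N k : ℕ} (H : Matrix (Fin M) (Fin N) ℝ) (L : Matrix (Fin m) (Fin N) ℝ)
    (svd : SVD m N L) (hk : k ≤ L.rank) (hkN : k ≤ N)
    (Lp : Matrix (Fin N) (Fin m) ℝ) (hLp : IsMoorePenrose L Lp)
    (τ ε : ℝ) (hτ : 0 ≤ τ) (hε : 0 ≤ ε)
    (hτε : ∀ x : Fin N → ℝ,
      _root_.enorm (H.mulVec x) ^ 2 ≤ τ * _root_.enorm (L.mulVec x) ^ 2 + ε * _root_.enorm x ^ 2) :
    let Vk : Matrix (Fin N) (Fin k) ℝ := svd.V.submatrix id (Fin.castLE hkN)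
    let T : Matrix (Fin M) (Fin m) ℝ := H * (Vk * Vkᵀ) * Lp
    opNorm (H - T * L) ^ 2 ≤ τ * svd.s (k + 1) ^ 2 + ε := by
  intro Vk T
  obtain ⟨hLLpL, hLpLLp, hsymm1, hsymm2⟩ := hLp
  obtain ⟨B, hB⟩ := vk_factor svd hk hkN
  set C : ℝ := τ * svd.s (k + 1) ^ 2 + ε with hCdef
  have hsk : 0 ≤ svd.s (k + 1) := svd.hs_nonneg _
  have hC : 0 ≤ C := by positivity
  -- Lp * L * Lᵀ = Lᵀ
  have hLpLLt : Lp * L * Lᵀ = Lᵀ := by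
    calc Lp * L * Lᵀ = (Lp * L)ᵀ * Lᵀ := by rw [hsymm2]
      _ = (L * (Lp * L))ᵀ := (Matrix.transpose_mul _ _).symm
      _ = Lᵀ := by rw [← Matrix.mul_assoc, hLLpL]
  have hVkdef : Vk = svd.V.submatrix id (Fin.castLE hkN) := rfl
  have hVkfix : Lp * L * Vk = Vk := by
    rw [hVkdef, hB, ← Matrix.mul_assoc, hLpLLt]
  have hPfix : (Vk * Vkᵀ) * (Lp * L) = Vk * Vkᵀ := by
    have h1 : Vkᵀ * (Lp * L) = Vkᵀ := by
      calc Vkᵀ * (Lp * L) = Vkᵀ * (Lp * L)ᵀ := by rw [hsymm2]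
        _ = ((Lp * L) * Vk)ᵀ := by rw [← Matrix.transpose_mul]
        _ = Vkᵀ := by rw [hVkfix]
    rw [Matrix.mul_assoc, h1]
  have hHTL : H - T * L = H * (1 - Vk * Vkᵀ) := by
    have hTL : T * L = H * (Vk * Vkᵀ) := by
      show H * (Vk * Vkᵀ) * Lp * L = _
      rw [Matrix.mul_assoc, Matrix.mul_assoc, hPfix]
    rw [hTL, Matrix.mul_sub, Matrix.mul_one]
  clear_value Vk T
  set S : Matrix (Fin m) (Fin N) ℝ :=
    Matrix.of fun (i : Fin m) (l : Fin N) => if (i : ℕ) = (l : ℕ) then svd.s ((i : ℕ) + 1) else 0 with hS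
  have hVVt : svd.V * svd.Vᵀ = 1 := mul_eq_one_comm.mp svd.hV
  have hLV : L * svd.V = svd.U * S := by
    have h : L * svd.V = svd.U * S * svd.Vᵀ * svd.V := by
      rw [hS]; exact congrArg (· * svd.V) svd.hL
    rw [h, Matrix.mul_assoc (svd.U * S) svd.Vᵀ svd.V, svd.hV, Matrix.mul_one]
  -- key pointwise bound
  have key : ∀ x : Fin N → ℝ, _root_.enorm ((H - T * L).mulVec x) ^ 2 ≤ C * _root_.enorm x ^ 2 := by
    intro x
    set z : Fin N → ℝ := svd.Vᵀ.mulVec x with hz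
    set z' : Fin N → ℝ := fun i => if (i : ℕ) < k then 0 else z i with hz'
    have hxz : svd.V.mulVec z = x := by
      rw [hz, mulVec_mulVec, hVVt, one_mulVec]
    have hsplit : (Vk * Vkᵀ).mulVec x
        = svd.V.mulVec (fun t => if (t : ℕ) < k then z t else 0) := by
      ext i
      rw [← mulVec_mulVec]
      have hVktx : Vkᵀ.mulVec x = fun j => z (Fin.castLE hkN j) := by
        ext j
        show ∑ l, Vkᵀ j l * x l = z (Fin.castLE hkN j)
        simp only [Matrix.transpose_apply, hVkdef, Matrix.submatrix_apply, id, hz]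
        rfl
      rw [hVktx, hVkdef]
      show ∑ j : Fin k, svd.V i (Fin.castLE hkN j) * z (Fin.castLE hkN j) = _
      have := sum_castLE hkN (fun t => svd.V i t * z t)
      rw [this]
      simp only [Matrix.mulVec, dotProduct]
      apply Finset.sum_congr rfl
      intro t _
      by_cases h : (t : ℕ) < k <;> simp [h]
    set y : Fin N → ℝ := (1 - Vk * Vkᵀ).mulVec x with hydef
    have hy : y = svd.V.mulVec z' := by
      rw [hydef, Matrix.sub_mulVec, Matrix.one_mulVec, hsplit, ← hxz, ← Matrix.mulVec_sub]
      have harg : (z - fun t : Fin N => if (t : ℕ) < k then z t else 0) = z' := by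
        funext t
        simp only [Pi.sub_apply, hz']
        by_cases h : (t : ℕ) < k <;> simp [h]
      rw [harg]
    have hzx : ∑ i, z i ^ 2 = _root_.enorm x ^ 2 := by
      rw [enorm_sq_eq, hz]
      exact sum_sq_mulVec_ortho (by rw [Matrix.transpose_transpose]; exact hVVt) x
    have hz'le : ∑ i, z' i ^ 2 ≤ _root_.enorm x ^ 2 := by
      rw [← hzx]
      apply Finset.sum_le_sum
      intro i _
      simp only [hz']
      by_cases h : (i : ℕ) < k
      · simp [h, sq_nonneg]
      · simp [h]
    have hynorm : _root_.enorm y ^ 2 ≤ _root_.enorm x ^ 2 := by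
      rw [hy, enorm_sq_eq, sum_sq_mulVec_ortho svd.hV z']
      exact hz'le
    have hLy : L.mulVec (svd.V.mulVec z') = svd.U.mulVec (S.mulVec z') := by
      rw [mulVec_mulVec, hLV, ← mulVec_mulVec]
    set F : ℕ → ℝ := fun n =>
      if h : n < N then svd.s (k + 1) ^ 2 * z' ⟨n, h⟩ ^ 2 else 0 with hF
    have hFnonneg : ∀ n, 0 ≤ F n := by
      intro n; simp only [hF]; split
      · positivity
      · exact le_refl 0
    have hSmv : ∀ t : Fin m, S.mulVec z' t
        = if h : (t : ℕ) < N then svd.s ((t : ℕ) + 1) * z' ⟨(t : ℕ), h⟩ else 0 := by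
      intro t
      simp only [Matrix.mulVec, dotProduct, hS, Matrix.of_apply]
      split
      · next h =>
        rw [Finset.sum_eq_single (⟨(t : ℕ), h⟩ : Fin N)]
        · simp
        · intro b _ hb
          have : ¬ ((t : ℕ) = (b : ℕ)) := by
            intro hh; apply hb; ext; simp [← hh]
          simp [this]
        · simp
      · next h =>
        apply Finset.sum_eq_zero
        intro b _
        have : ¬ ((t : ℕ) = (b : ℕ)) := by
          intro hh; exact h (hh ▸ b.isLt)
        simp [this]
    have hterm : ∀ t : Fin m, (S.mulVec z' t) ^ 2 ≤ F (t : ℕ) := by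
      intro t
      rw [hSmv t]
      by_cases h : (t : ℕ) < N
      · rw [dif_pos h]
        simp only [hF, dif_pos h]
        by_cases hk' : (t : ℕ) < k
        · have hzz : z' (⟨(t : ℕ), h⟩ : Fin N) = 0 := by simp [hz', hk']
          simp [hzz]
        · have hle : svd.s ((t : ℕ) + 1) ≤ svd.s (k + 1) :=
            svd.hs_anti _ _ (by omega)
          rw [mul_pow]
          exact mul_le_mul_of_nonneg_right
            (pow_le_pow_left₀ (svd.hs_nonneg _) hle 2) (sq_nonneg _)
      · rw [dif_neg h]
        simp [hF, dif_neg h]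
    have hSsum : ∑ t : Fin m, (S.mulVec z' t) ^ 2 ≤ svd.s (k + 1) ^ 2 * _root_.enorm x ^ 2 := by
      calc ∑ t : Fin m, (S.mulVec z' t) ^ 2 ≤ ∑ t : Fin m, F (t : ℕ) :=
            Finset.sum_le_sum (fun t _ => hterm t)
        _ = ∑ n ∈ Finset.range m, F n := Fin.sum_univ_eq_sum_range F m
        _ ≤ ∑ n ∈ Finset.range (max m N), F n :=
            Finset.sum_le_sum_of_subset_of_nonneg
              (Finset.range_subset_range.2 (le_max_left m N)) (fun n _ _ => hFnonneg n)
        _ = ∑ n ∈ Finset.range N, F n := by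
            refine (Finset.sum_subset (Finset.range_subset_range.2 (le_max_right m N)) ?_).symm
            intro n _ hn
            simp only [Finset.mem_range, not_lt] at hn
            simp only [hF, dif_neg (not_lt.2 hn)]
        _ = ∑ i : Fin N, F (i : ℕ) := (Fin.sum_univ_eq_sum_range F N).symm
        _ = ∑ i : Fin N, svd.s (k + 1) ^ 2 * z' i ^ 2 := by
            apply Finset.sum_congr rfl
            intro i _
            simp only [hF, dif_pos i.isLt, Fin.eta]
        _ = svd.s (k + 1) ^ 2 * ∑ i, z' i ^ 2 := by rw [Finset.mul_sum]
        _ ≤ svd.s (k + 1) ^ 2 * _root_.enorm x ^ 2 :=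
            mul_le_mul_of_nonneg_left hz'le (by positivity)
    have hLynorm : _root_.enorm (L.mulVec y) ^ 2
        ≤ svd.s (k + 1) ^ 2 * _root_.enorm x ^ 2 := by
      rw [hy, hLy, enorm_sq_eq, sum_sq_mulVec_ortho svd.hU]
      exact hSsum
    have hstep := hτε y
    have h1 : _root_.enorm ((H - T * L).mulVec x) ^ 2 = _root_.enorm (H.mulVec y) ^ 2 := by
      rw [hHTL, ← mulVec_mulVec, ← hydef]
    have h2 := add_le_add (mul_le_mul_of_nonneg_left hLynorm hτ)
      (mul_le_mul_of_nonneg_left hynorm hε)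
    rw [h1, hCdef]
    calc _root_.enorm (H.mulVec y) ^ 2
        ≤ τ * _root_.enorm (L.mulVec y) ^ 2 + ε * _root_.enorm y ^ 2 := hstep
      _ ≤ τ * (svd.s (k + 1) ^ 2 * _root_.enorm x ^ 2) + ε * _root_.enorm x ^ 2 := h2
      _ = (τ * svd.s (k + 1) ^ 2 + ε) * _root_.enorm x ^ 2 := by ring
  -- conclude via sSup
  have hbound : ∀ t ∈ {t : ℝ | ∃ x : Fin N → ℝ, _root_.enorm x ≤ 1 ∧ t = _root_.enorm ((H - T * L).mulVec x)},
      t ≤ Real.sqrt C := by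
    rintro t ⟨x, hx1, rfl⟩
    rw [← Real.sqrt_sq (enorm_nonneg' _)]
    apply Real.sqrt_le_sqrt
    calc _root_.enorm ((H - T * L).mulVec x) ^ 2 ≤ C * _root_.enorm x ^ 2 := key x
      _ ≤ C * 1 := by
          apply mul_le_mul_of_nonneg_left _ hC
          calc _root_.enorm x ^ 2 ≤ 1 ^ 2 := pow_le_pow_left₀ (enorm_nonneg' _) hx1 2
            _ = 1 := one_pow 2
      _ = C := mul_one C
  have h0mem : (0 : ℝ) ∈ {t : ℝ | ∃ x : Fin N → ℝ, _root_.enorm x ≤ 1 ∧ t = _root_.enorm ((H - T * L).mulVec x)} := by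
    refine ⟨0, ?_, ?_⟩
    · simp [_root_.enorm]
    · simp [_root_.enorm]
  have hub : opNorm (H - T * L) ≤ Real.sqrt C :=
    Real.sSup_le hbound (Real.sqrt_nonneg C)
  have hlb : 0 ≤ opNorm (H - T * L) :=
    le_csSup ⟨Real.sqrt C, hbound⟩ h0mem
  calc opNorm (H - T * L) ^ 2 ≤ (Real.sqrt C) ^ 2 := pow_le_pow_left₀ hlb hub 2
    _ = C := Real.sq_sqrt hC
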